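/- The twelve quadratic polynomials I_{ij} = ωᵢ·ω_j and Ĩ_{ij} = ωᵢ·v_j + vᵢ·ω_j (1 ≤ i ≤ j ≤ 3), viewed as elements of the polynomial ring ℝ[ω₁,v₁,ω₂,v₂,ω₃,v₃] in 18 variables, are algebraically independent over ℝ. -/
import Mathlib


open Matrix MvPolynomial

/-- Variables: `(i, false, r)` is the `r`-th coordinate of `ωᵢ`, and `(i, true, r)` is the
`r`-th coordinate of `vᵢ`, for three twists `(ωᵢ, vᵢ)`, `i = 1,2,3`. -/
abbrev TwistVar := Fin 3 × Bool × Fin 3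

/-- `I_{ij} = ωᵢ·ω_j` as a polynomial in the 18 variables. -/
noncomputable def Iquad (i j : Fin 3) : MvPolynomial TwistVar ℝ :=
  ∑ r : Fin 3, X (i, false, r) * X (j, false, r)

/-- `Ĩ_{ij} = ωᵢ·v_j + vᵢ·ω_j` as a polynomial in the 18 variables. -/
noncomputable def Jquad (i j : Fin 3) : MvPolynomial TwistVar ℝ :=
  ∑ r : Fin 3, (X (i, false, r) * X (j, true, r) + X (i, true, r) * X (j, false, r))

noncomputable section QuadAux

/-- The index type of the family of invariants. -/
abbrev QIdx : Type := {p : Fin 3 × Fin 3 // p.1 ≤ p.2} × Bool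

/-- Polynomial ring on the 12 invariant indices. -/
abbrev QS : Type := MvPolynomial QIdx ℝ

/-- A big algebraically closed field containing 12 independent transcendentals. -/
abbrev QK : Type := AlgebraicClosure (FractionRing QS)

/-- The 12 independent transcendentals in `QK`. -/
def qc (q : QIdx) : QK := algebraMap QS QK (X q)

lemma qS_inj : Function.Injective (algebraMap QS QK) := by
  have h : (algebraMap QS QK)
      = (algebraMap (FractionRing QS) QK).comp (algebraMap QS (FractionRing QS)) :=
    IsScalarTower.algebraMap_eq _ _ _
  rw [h, RingHom.coe_comp]
  exact (RingHom.injective _).comp (IsFractionRing.injective QS (FractionRing QS))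

instance : CharZero QK :=
  charZero_of_injective_algebraMap (algebraMap ℝ QK).injective

lemma qc_algInd : AlgebraicIndependent ℝ qc := by
  rw [algebraicIndependent_iff_injective_aeval]
  have h : (MvPolynomial.aeval qc : QS →ₐ[ℝ] QK) = IsScalarTower.toAlgHom ℝ QS QK := by
    apply MvPolynomial.algHom_ext
    intro q
    simp [qc]
  rw [h]
  exact qS_inj

lemma qnz (p : QS) (pt : QIdx → ℝ) (h : MvPolynomial.eval pt p ≠ 0) :
    algebraMap QS QK p ≠ 0 := by
  intro h0
  have hp : p = 0 := qS_inj (by rw [h0, map_zero])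
  rw [hp] at h
  simp at h

/-! Names for the twelve indices. -/

def i00 : QIdx := (⟨((0 : Fin 3), (0 : Fin 3)), by decide⟩, false)
def i01 : QIdx := (⟨((0 : Fin 3), (1 : Fin 3)), by decide⟩, false)
def i02 : QIdx := (⟨((0 : Fin 3), (2 : Fin 3)), by decide⟩, false)
def i11 : QIdx := (⟨((1 : Fin 3), (1 : Fin 3)), by decide⟩, false)
def i12 : QIdx := (⟨((1 : Fin 3), (2 : Fin 3)), by decide⟩, false)
def i22 : QIdx := (⟨((2 : Fin 3), (2 : Fin 3)), by decide⟩, false)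
def j00 : QIdx := (⟨((0 : Fin 3), (0 : Fin 3)), by decide⟩, true)
def j01 : QIdx := (⟨((0 : Fin 3), (1 : Fin 3)), by decide⟩, true)
def j02 : QIdx := (⟨((0 : Fin 3), (2 : Fin 3)), by decide⟩, true)
def j11 : QIdx := (⟨((1 : Fin 3), (1 : Fin 3)), by decide⟩, true)
def j12 : QIdx := (⟨((1 : Fin 3), (2 : Fin 3)), by decide⟩, true)
def j22 : QIdx := (⟨((2 : Fin 3), (2 : Fin 3)), by decide⟩, true)

def u11 : QK := qc i00
def u12 : QK := qc i01
def u13 : QK := qc i02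
def u22 : QK := qc i11
def u23 : QK := qc i12
def u33 : QK := qc i22
def w11 : QK := qc j00
def w12 : QK := qc j01
def w13 : QK := qc j02
def w22 : QK := qc j11
def w23 : QK := qc j12
def w33 : QK := qc j22

lemma u22_ne : u22 ≠ 0 := by
  exact qnz (X i11) (fun q => if q = i11 then 1 else 0) (by simp)

lemma aQ_ne : u12 ^ 2 - u11 * u22 ≠ 0 := by
  have h : u12 ^ 2 - u11 * u22 = algebraMap QS QK ((X i01) ^ 2 - X i00 * X i11) := by
    simp [u12, u11, u22, qc, map_sub, _root_.map_mul, map_pow]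
  rw [h]
  apply qnz _ (fun q => if q = i01 then 1 else 0)
  have h1 : (i00 : QIdx) ≠ i01 := by decide
  have h2 : (i11 : QIdx) ≠ i01 := by decide
  simp [h1, h2]

lemma dQ_ne :
    (2 * (u13 * u22 - u12 * u23)) ^ 2
      - 4 * (u12 ^ 2 - u11 * u22) * (u23 ^ 2 - u33 * u22) ≠ 0 := by
  have h : (2 * (u13 * u22 - u12 * u23)) ^ 2
      - 4 * (u12 ^ 2 - u11 * u22) * (u23 ^ 2 - u33 * u22)
      = algebraMap QS QK ((2 * (X i02 * X i11 - X i01 * X i12)) ^ 2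
          - 4 * ((X i01) ^ 2 - X i00 * X i11) * ((X i12) ^ 2 - X i22 * X i11)) := by
    simp [u11, u12, u13, u22, u23, u33, qc, map_sub, _root_.map_mul, map_pow, map_add,
      map_ofNat]
    try ring
  rw [h]
  apply qnz _ (fun q => if q = i02 ∨ q = i11 then 1 else 0)
  have h1 : ¬((i00 : QIdx) = i02 ∨ (i00 : QIdx) = i11) := by decide
  have h2 : ¬((i01 : QIdx) = i02 ∨ (i01 : QIdx) = i11) := by decide
  have h3 : ¬((i12 : QIdx) = i02 ∨ (i12 : QIdx) = i11) := by decide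
  have h4 : ¬((i22 : QIdx) = i02 ∨ (i22 : QIdx) = i11) := by decide
  have h5 : ((i02 : QIdx) = i02 ∨ (i02 : QIdx) = i11) := by decide
  have h6 : ((i11 : QIdx) = i02 ∨ (i11 : QIdx) = i11) := by decide
  simp only [eval_X, eval_mul, eval_sub, eval_pow, eval_ofNat, h1, h2, h3, h4, h5, h6,
    if_true, if_false]
  norm_num

/-- `tQ` is a square root of `u22`. -/
def tQ : QK := Classical.choose (IsAlgClosed.exists_pow_nat_eq u22 (n := 2) (by norm_num))

lemma tQ_sq : tQ ^ 2 = u22 :=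
  Classical.choose_spec (IsAlgClosed.exists_pow_nat_eq u22 (n := 2) (by norm_num))

lemma tQ_ne : tQ ≠ 0 := by
  intro h
  apply u22_ne
  rw [← tQ_sq, h]
  ring

/-- `sQ` is a square root of the discriminant. -/
def sQ : QK := Classical.choose (IsAlgClosed.exists_pow_nat_eq
  ((2 * (u13 * u22 - u12 * u23)) ^ 2
    - 4 * (u12 ^ 2 - u11 * u22) * (u23 ^ 2 - u33 * u22)) (n := 2) (by norm_num))

lemma sQ_sq : sQ ^ 2 = (2 * (u13 * u22 - u12 * u23)) ^ 2
    - 4 * (u12 ^ 2 - u11 * u22) * (u23 ^ 2 - u33 * u22) :=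
  Classical.choose_spec (IsAlgClosed.exists_pow_nat_eq _ (n := 2) (by norm_num))

lemma sQ_ne : sQ ≠ 0 := by
  intro h
  apply dQ_ne
  rw [← sQ_sq, h]
  ring

/-- `imQ` is a square root of `-1`. -/
def imQ : QK := Classical.choose (IsAlgClosed.exists_pow_nat_eq (-1 : QK) (n := 2) (by norm_num))

lemma imQ_sq : imQ ^ 2 = -1 :=
  Classical.choose_spec (IsAlgClosed.exists_pow_nat_eq (-1 : QK) (n := 2) (by norm_num))

/-! Isotropic components of the `ω` vectors. -/

def αQ : QK := (-(2 * (u13 * u22 - u12 * u23)) + sQ) / (2 * (u12 ^ 2 - u11 * u22))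
def βQ : QK := u13 - αQ * u11 / 2
def γQ : QK := (u23 - αQ * u12) / tQ

lemma βQ_def : βQ = u13 - αQ * u11 / 2 := rfl

lemma two_aQ_ne : (2 : QK) * (u12 ^ 2 - u11 * u22) ≠ 0 :=
  mul_ne_zero two_ne_zero aQ_ne

lemma αQ_rel : αQ * (2 * (u12 ^ 2 - u11 * u22)) = -(2 * (u13 * u22 - u12 * u23)) + sQ := by
  rw [αQ]
  exact div_mul_cancel₀ _ two_aQ_ne

lemma quadE : (u12 ^ 2 - u11 * u22) * αQ ^ 2 + 2 * (u13 * u22 - u12 * u23) * αQ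
    + (u23 ^ 2 - u33 * u22) = 0 := by
  have h4 : 4 * (u12 ^ 2 - u11 * u22) *
      ((u12 ^ 2 - u11 * u22) * αQ ^ 2 + 2 * (u13 * u22 - u12 * u23) * αQ
        + (u23 ^ 2 - u33 * u22)) = 0 := by
    linear_combination (αQ * (2 * (u12 ^ 2 - u11 * u22)) + 2 * (u13 * u22 - u12 * u23) + sQ)
      * αQ_rel + sQ_sq
  rcases mul_eq_zero.mp h4 with h | h
  · exact absurd h (by
      intro h'
      rcases mul_eq_zero.mp h' with h'' | h''
      · exact absurd h'' (by norm_num)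
      · exact aQ_ne h'')
  · exact h

lemma γQ_rel : γQ * tQ = u23 - αQ * u12 := by
  rw [γQ]; exact div_mul_cancel₀ _ tQ_ne

/-- The determinant-like quantity `eQ`. -/
def eQ : QK := βQ - αQ * u11 / 2 - u12 * γQ / tQ

lemma eQ_rel : eQ * tQ = βQ * tQ - αQ * u11 / 2 * tQ - u12 * γQ := by
  have h := div_mul_cancel₀ (u12 * γQ) tQ_ne
  rw [eQ]
  linear_combination (-1 : QK) * h

lemma eQ_key : u22 * eQ = sQ / 2 := by
  linear_combination tQ * eQ_rel + (-eQ + βQ - αQ * u11 / 2) * tQ_sq - u12 * γQ_rel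
    + u22 * βQ_def + (1 / 2 : QK) * αQ_rel

lemma eQ_ne : eQ ≠ 0 := by
  intro h
  apply sQ_ne
  have h3 := eQ_key
  rw [h, mul_zero] at h3
  linear_combination (-2 : QK) * h3

/-! The `v` vectors: solutions to `B(v, ω_j) = d_j`. -/

def pv (d1 d2 d3 : QK) : QK := (d3 - d1 * αQ - d2 * γQ / tQ) / eQ
def qv (d1 d2 d3 : QK) : QK := d1 - pv d1 d2 d3 * u11 / 2
def rv (d1 d2 d3 : QK) : QK := (d2 - pv d1 d2 d3 * u12) / tQ

lemma pv_rel (d1 d2 d3 : QK) :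
    pv d1 d2 d3 * eQ * tQ = (d3 - d1 * αQ) * tQ - d2 * γQ := by
  rw [pv]
  have h1 := div_mul_cancel₀ (d3 - d1 * αQ - d2 * γQ / tQ) eQ_ne
  have h2 := div_mul_cancel₀ (d2 * γQ) tQ_ne
  linear_combination tQ * h1 - h2

lemma rv_rel (d1 d2 d3 : QK) : rv d1 d2 d3 * tQ = d2 - pv d1 d2 d3 * u12 := by
  rw [rv]; exact div_mul_cancel₀ _ tQ_ne

lemma solve1 (d1 d2 d3 : QK) :
    pv d1 d2 d3 * (u11 / 2) + 1 * qv d1 d2 d3 + rv d1 d2 d3 * 0 = d1 := by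
  rw [qv]; ring

lemma solve2 (d1 d2 d3 : QK) :
    pv d1 d2 d3 * u12 + 0 * qv d1 d2 d3 + rv d1 d2 d3 * tQ = d2 := by
  linear_combination rv_rel d1 d2 d3

lemma solve3 (d1 d2 d3 : QK) :
    pv d1 d2 d3 * βQ + αQ * qv d1 d2 d3 + rv d1 d2 d3 * γQ = d3 := by
  have h0 : eQ * tQ ≠ 0 := mul_ne_zero eQ_ne tQ_ne
  apply mul_right_cancel₀ h0
  rw [qv]
  linear_combination eQ * pv_rel d1 d2 d3 + γQ * eQ * rv_rel d1 d2 d3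
    - pv d1 d2 d3 * eQ * eQ_rel

/-! Coordinates. -/

/-- coordinates of a vector from its isotropic components. -/
def co (a b g : QK) : Fin 3 → QK := ![a + b / 2, imQ * (a - b / 2), g]

lemma dot_co (a b g a' b' g' : QK) :
    ∑ r : Fin 3, co a b g r * co a' b' g' r = a * b' + a' * b + g * g' := by
  rw [Fin.sum_univ_three]
  simp only [co, Matrix.cons_val_zero, Matrix.cons_val_one, Matrix.head_cons,
    Matrix.cons_val_two, Matrix.tail_cons]
  linear_combination (a - b / 2) * (a' - b' / 2) * imQ_sq

def Aω : Fin 3 → QK := ![1, 0, αQ]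
def Bω : Fin 3 → QK := ![u11 / 2, u12, βQ]
def Gω : Fin 3 → QK := ![0, tQ, γQ]

def wvm : Fin 3 → Fin 3 → QK := ![![w11, w12, w13], ![w12, w22, w23], ![w13, w23, w33]]
def dvm : Fin 3 → Fin 3 → QK := fun i j => wvm i j / 2

def Av : Fin 3 → QK := fun i => pv (dvm i 0) (dvm i 1) (dvm i 2)
def Bv : Fin 3 → QK := fun i => qv (dvm i 0) (dvm i 1) (dvm i 2)
def Gv : Fin 3 → QK := fun i => rv (dvm i 0) (dvm i 1) (dvm i 2)

/-- the substitution. -/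
def σf : TwistVar → QK := fun x =>
  cond x.2.1 (co (Av x.1) (Bv x.1) (Gv x.1) x.2.2) (co (Aω x.1) (Bω x.1) (Gω x.1) x.2.2)

lemma aeval_Igen (i j : Fin 3) :
    aeval σf (Iquad i j) = Aω i * Bω j + Aω j * Bω i + Gω i * Gω j := by
  have h : ∀ r : Fin 3,
      (aeval σf) ((X (i, false, r) * X (j, false, r) : MvPolynomial TwistVar ℝ))
      = co (Aω i) (Bω i) (Gω i) r * co (Aω j) (Bω j) (Gω j) r := by
    intro r
    simp [σf]
  rw [Iquad, map_sum, Finset.sum_congr rfl fun r _ => h r]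
  exact dot_co _ _ _ _ _ _

lemma aeval_Jgen (i j : Fin 3) :
    aeval σf (Jquad i j)
      = (Aω i * Bv j + Av j * Bω i + Gω i * Gv j)
        + (Av i * Bω j + Aω j * Bv i + Gv i * Gω j) := by
  have h : ∀ r : Fin 3, (aeval σf)
      ((X (i, false, r) * X (j, true, r) + X (i, true, r) * X (j, false, r) :
        MvPolynomial TwistVar ℝ))
      = co (Aω i) (Bω i) (Gω i) r * co (Av j) (Bv j) (Gv j) r
        + co (Av i) (Bv i) (Gv i) r * co (Aω j) (Bω j) (Gω j) r := by
    intro r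
    simp [σf]
  rw [Jquad, map_sum, Finset.sum_congr rfl fun r _ => h r, Finset.sum_add_distrib,
    dot_co, dot_co]

end QuadAux

/-- The twelve quadratic invariants `I_{ij}`, `Ĩ_{ij}` (`1 ≤ i ≤ j ≤ 3`) are algebraically
independent over `ℝ`. -/
theorem quadratic_invariants_algebraically_independent :
    AlgebraicIndependent ℝ
      (fun q : {p : Fin 3 × Fin 3 // p.1 ≤ p.2} × Bool =>
        if q.2 then Jquad q.1.1.1 q.1.1.2 else Iquad q.1.1.1 q.1.1.2) := by
  classical
  have hfam : ∀ q : QIdx,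
      (aeval σf) ((fun q : QIdx =>
        if q.2 then Jquad q.1.1.1 q.1.1.2 else Iquad q.1.1.1 q.1.1.2) q) = qc q := by
    rintro ⟨⟨⟨i, j⟩, hij⟩, bb⟩
    fin_cases i <;> fin_cases j <;> (try exact absurd hij (by decide)) <;> cases bb
    -- (0,0) false
    · show aeval σf (Iquad 0 0) = u11
      rw [aeval_Igen]
      simp only [Aω, Bω, Gω, Matrix.cons_val_zero, Matrix.cons_val_one, Matrix.head_cons, Matrix.cons_val_two,
        Matrix.tail_cons]
      ring
    -- (0,0) true
    · show aeval σf (Jquad 0 0) = w11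
      rw [aeval_Jgen]
      simp only [Aω, Bω, Gω, Av, Bv, Gv, dvm, wvm, Matrix.cons_val_zero, Matrix.cons_val_one, Matrix.head_cons, Matrix.cons_val_two,
        Matrix.tail_cons]
      linear_combination 2 * solve1 (w11 / 2) (w12 / 2) (w13 / 2)
    -- (0,1) false
    · show aeval σf (Iquad 0 1) = u12
      rw [aeval_Igen]
      simp only [Aω, Bω, Gω, Matrix.cons_val_zero, Matrix.cons_val_one, Matrix.head_cons, Matrix.cons_val_two,
        Matrix.tail_cons]
      ring
    -- (0,1) true
    · show aeval σf (Jquad 0 1) = w12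
      rw [aeval_Jgen]
      simp only [Aω, Bω, Gω, Av, Bv, Gv, dvm, wvm, Matrix.cons_val_zero, Matrix.cons_val_one, Matrix.head_cons, Matrix.cons_val_two,
        Matrix.tail_cons]
      linear_combination solve1 (w12 / 2) (w22 / 2) (w23 / 2)
        + solve2 (w11 / 2) (w12 / 2) (w13 / 2)
    -- (0,2) false
    · show aeval σf (Iquad 0 2) = u13
      rw [aeval_Igen]
      simp only [Aω, Bω, Gω, Matrix.cons_val_zero, Matrix.cons_val_one, Matrix.head_cons, Matrix.cons_val_two,
        Matrix.tail_cons]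
      rw [βQ_def]; ring
    -- (0,2) true
    · show aeval σf (Jquad 0 2) = w13
      rw [aeval_Jgen]
      simp only [Aω, Bω, Gω, Av, Bv, Gv, dvm, wvm, Matrix.cons_val_zero, Matrix.cons_val_one, Matrix.head_cons, Matrix.cons_val_two,
        Matrix.tail_cons]
      linear_combination solve1 (w13 / 2) (w23 / 2) (w33 / 2)
        + solve3 (w11 / 2) (w12 / 2) (w13 / 2)
    -- (1,1) false
    · show aeval σf (Iquad 1 1) = u22
      rw [aeval_Igen]
      simp only [Aω, Bω, Gω, Matrix.cons_val_zero, Matrix.cons_val_one, Matrix.head_cons, Matrix.cons_val_two,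
        Matrix.tail_cons]
      linear_combination tQ_sq
    -- (1,1) true
    · show aeval σf (Jquad 1 1) = w22
      rw [aeval_Jgen]
      simp only [Aω, Bω, Gω, Av, Bv, Gv, dvm, wvm, Matrix.cons_val_zero, Matrix.cons_val_one, Matrix.head_cons, Matrix.cons_val_two,
        Matrix.tail_cons]
      linear_combination 2 * solve2 (w12 / 2) (w22 / 2) (w23 / 2)
    -- (1,2) false
    · show aeval σf (Iquad 1 2) = u23
      rw [aeval_Igen]
      simp only [Aω, Bω, Gω, Matrix.cons_val_zero, Matrix.cons_val_one, Matrix.head_cons, Matrix.cons_val_two,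
        Matrix.tail_cons]
      linear_combination γQ_rel
    -- (1,2) true
    · show aeval σf (Jquad 1 2) = w23
      rw [aeval_Jgen]
      simp only [Aω, Bω, Gω, Av, Bv, Gv, dvm, wvm, Matrix.cons_val_zero, Matrix.cons_val_one, Matrix.head_cons, Matrix.cons_val_two,
        Matrix.tail_cons]
      linear_combination solve2 (w13 / 2) (w23 / 2) (w33 / 2)
        + solve3 (w12 / 2) (w22 / 2) (w23 / 2)
    -- (2,2) false
    · show aeval σf (Iquad 2 2) = u33
      rw [aeval_Igen]
      simp only [Aω, Bω, Gω, Matrix.cons_val_zero, Matrix.cons_val_one, Matrix.head_cons, Matrix.cons_val_two,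
        Matrix.tail_cons]
      apply mul_right_cancel₀ u22_ne
      linear_combination quadE + (γQ * tQ + u23 - αQ * u12) * γQ_rel - γQ ^ 2 * tQ_sq
        + 2 * αQ * u22 * βQ_def
    -- (2,2) true
    · show aeval σf (Jquad 2 2) = w33
      rw [aeval_Jgen]
      simp only [Aω, Bω, Gω, Av, Bv, Gv, dvm, wvm, Matrix.cons_val_zero, Matrix.cons_val_one, Matrix.head_cons, Matrix.cons_val_two,
        Matrix.tail_cons]
      linear_combination 2 * solve3 (w13 / 2) (w23 / 2) (w33 / 2)
  have hcomp : (⇑(aeval σf) ∘ (fun q : QIdx =>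
      if q.2 then Jquad q.1.1.1 q.1.1.2 else Iquad q.1.1.1 q.1.1.2)) = qc := by
    funext q
    exact hfam q
  exact AlgebraicIndependent.of_comp (aeval σf) (by rw [hcomp]; exact qc_algInd)
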